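/- For all t₁, t₂ ∈ ℝ with π/8 ≤ s₁ − t₁ ≤ π/2 and π/8 ≤ s₁ − t₂ ≤ π/2, one has (1/2)·|t₁ − t₂| ≤ |Ψ(t₁) − Ψ(t₂)| ≤ π·|t₁ − t₂|. -/

import Mathlib

/-- The circular helix `u(s) = (cos as, sin as, √(1−a²)·s)` in `ℝ³` (Euclidean). -/
noncomputable def helix (a : ℝ) (s : ℝ) : EuclideanSpace ℝ (Fin 3) :=
  (WithLp.equiv 2 (Fin 3 → ℝ)).symm
    ![Real.cos (a * s), Real.sin (a * s), Real.sqrt (1 - a ^ 2) * s]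

lemma helix_norm_sq (a : ℝ) (ha0 : 0 < a) (ha1 : a < 1) (s₁ t : ℝ) :
    ‖helix a t - helix a s₁‖ ^ 2 = 2 - 2 * Real.cos (a * (t - s₁)) + (1 - a ^ 2) * (t - s₁) ^ 2 := by
  have h1 : (0:ℝ) ≤ 1 - a ^ 2 := by nlinarith
  rw [EuclideanSpace.norm_eq, Real.sq_sqrt (by positivity)]
  simp only [helix, WithLp.equiv_symm_apply, PiLp.toLp_apply, Fin.sum_univ_three, PiLp.sub_apply,
    Matrix.cons_val_zero, Matrix.cons_val_one, Matrix.head_cons, Matrix.cons_val_two,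
    Matrix.tail_cons, Real.norm_eq_abs, sq_abs]
  have h2 : Real.sqrt (1 - a ^ 2) ^ 2 = 1 - a ^ 2 := Real.sq_sqrt h1
  have h3 := Real.cos_sub (a * t) (a * s₁)
  have h4 := Real.sin_sq_add_cos_sq (a * t)
  have h5 := Real.sin_sq_add_cos_sq (a * s₁)
  have h6 : a * (t - s₁) = a * t - a * s₁ := by ring
  rw [h6, h3]
  nlinarith [h2, h4, h5]

lemma psi_hasDerivAt (a s₁ t : ℝ) :
    HasDerivAt (fun t => 2 - 2 * Real.cos (a * (t - s₁)) + (1 - a ^ 2) * (t - s₁) ^ 2)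
      (2 * a * Real.sin (a * (t - s₁)) + 2 * (1 - a ^ 2) * (t - s₁)) t := by
  have h0 : HasDerivAt (fun t : ℝ => t - s₁) 1 t := (hasDerivAt_id t).sub_const s₁
  have h1 : HasDerivAt (fun t : ℝ => a * (t - s₁)) (a * 1) t := h0.const_mul a
  have hcos := h1.cos
  have hsq : HasDerivAt (fun t : ℝ => (t - s₁) ^ 2) (2 * (t - s₁) ^ 1 * 1) t := h0.pow 2
  have := ((hasDerivAt_const t (2:ℝ)).sub (hcos.const_mul 2)).add (hsq.const_mul (1 - a ^ 2))
  refine this.congr_deriv ?_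
  ring

lemma deriv_bounds (a : ℝ) (ha0 : 0 < a) (ha1 : a < 1) (y : ℝ)
    (hy1 : Real.pi / 8 ≤ y) (hy2 : y ≤ Real.pi / 2) :
    1 / 2 ≤ 2 * a * Real.sin (a * y) + 2 * (1 - a ^ 2) * y ∧
      2 * a * Real.sin (a * y) + 2 * (1 - a ^ 2) * y ≤ Real.pi := by
  have hpi := Real.pi_gt_three
  have hpi0 := Real.pi_pos
  have hy0 : 0 < y := by linarith
  have hay0 : 0 ≤ a * y := by positivity
  have hay : a * y ≤ Real.pi / 2 := by nlinarith
  have hlow : 2 / Real.pi * (a * y) ≤ Real.sin (a * y) := Real.mul_le_sin hay0 hay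
  have hup : Real.sin (a * y) ≤ a * y := Real.sin_le hay0
  constructor
  · have key : 1 / 2 * Real.pi ≤ (2 * a * (2 / Real.pi * (a * y)) + 2 * (1 - a ^ 2) * y) * Real.pi := by
      have e : (2 * a * (2 / Real.pi * (a * y)) + 2 * (1 - a ^ 2) * y) * Real.pi
          = 4 * a ^ 2 * y + 2 * (1 - a ^ 2) * y * Real.pi := by
        field_simp; ring
      rw [e]
      have ha2 : (0:ℝ) ≤ 1 - a ^ 2 := by nlinarith
      have hA : 4 * a ^ 2 * (Real.pi / 8) ≤ 4 * a ^ 2 * y :=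
        mul_le_mul_of_nonneg_left hy1 (by positivity)
      have hB : 2 * (1 - a ^ 2) * (Real.pi / 8) * Real.pi ≤ 2 * (1 - a ^ 2) * y * Real.pi :=
        mul_le_mul_of_nonneg_right (mul_le_mul_of_nonneg_left hy1 (by linarith)) hpi0.le
      have hC : 0 ≤ (1 - a ^ 2) * ((Real.pi - 2) * Real.pi) :=
        mul_nonneg ha2 (mul_nonneg (by linarith) hpi0.le)
      nlinarith [hA, hB, hC]
    have key2 : 1 / 2 ≤ 2 * a * (2 / Real.pi * (a * y)) + 2 * (1 - a ^ 2) * y :=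
      le_of_mul_le_mul_right key hpi0
    nlinarith [key2]
  · nlinarith [mul_pos ha0 hy0]

/-- for `t₁, t₂` with `π/8 ≤ s₁ − tᵢ ≤ π/2`,
`(1/2)|t₁ − t₂| ≤ |Ψ(t₁) − Ψ(t₂)| ≤ π|t₁ − t₂|`, where `Ψ(s) = ‖u(s) − u(s₁)‖²`. -/
theorem statement13 (a : ℝ) (ha0 : 0 < a) (ha1 : a < 1) (s₁ : ℝ) :
    ∀ t₁ t₂ : ℝ,
      Real.pi / 8 ≤ s₁ - t₁ → s₁ - t₁ ≤ Real.pi / 2 →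
      Real.pi / 8 ≤ s₁ - t₂ → s₁ - t₂ ≤ Real.pi / 2 →
      (1 / 2) * |t₁ - t₂| ≤
          |‖helix a t₁ - helix a s₁‖ ^ 2 - ‖helix a t₂ - helix a s₁‖ ^ 2| ∧
        |‖helix a t₁ - helix a s₁‖ ^ 2 - ‖helix a t₂ - helix a s₁‖ ^ 2| ≤
          Real.pi * |t₁ - t₂| := by
  set f : ℝ → ℝ := fun t => 2 - 2 * Real.cos (a * (t - s₁)) + (1 - a ^ 2) * (t - s₁) ^ 2 with hf
  have key : ∀ t₁ t₂ : ℝ, t₁ < t₂ →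
      Real.pi / 8 ≤ s₁ - t₁ → s₁ - t₁ ≤ Real.pi / 2 →
      Real.pi / 8 ≤ s₁ - t₂ → s₁ - t₂ ≤ Real.pi / 2 →
      (1 / 2) * |t₁ - t₂| ≤ |f t₁ - f t₂| ∧ |f t₁ - f t₂| ≤ Real.pi * |t₁ - t₂| := by
    intro t₁ t₂ hlt h1 h2 h3 h4
    obtain ⟨c, hc, hc'⟩ := exists_hasDerivAt_eq_slope f
      (fun t => 2 * a * Real.sin (a * (t - s₁)) + 2 * (1 - a ^ 2) * (t - s₁)) hlt
      (fun t _ => (psi_hasDerivAt a s₁ t).continuousAt.continuousWithinAt)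
      (fun t _ => psi_hasDerivAt a s₁ t)
    obtain ⟨hcl, hcr⟩ := hc
    have hne : t₂ - t₁ ≠ 0 := by linarith
    have heq : f t₂ - f t₁
        = (2 * a * Real.sin (a * (c - s₁)) + 2 * (1 - a ^ 2) * (c - s₁)) * (t₂ - t₁) := by
      field_simp at hc'
      linarith [hc']
    have hy1 : Real.pi / 8 ≤ s₁ - c := by linarith
    have hy2 : s₁ - c ≤ Real.pi / 2 := by linarith
    obtain ⟨hb1, hb2⟩ := deriv_bounds a ha0 ha1 (s₁ - c) hy1 hy2
    have hsin : Real.sin (a * (c - s₁)) = - Real.sin (a * (s₁ - c)) := by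
      rw [show a * (c - s₁) = -(a * (s₁ - c)) by ring, Real.sin_neg]
    have heq2 : f t₁ - f t₂
        = (2 * a * Real.sin (a * (s₁ - c)) + 2 * (1 - a ^ 2) * (s₁ - c)) * (t₂ - t₁) := by
      rw [hsin] at heq
      nlinarith [heq]
    have hpos : (0:ℝ) < t₂ - t₁ := sub_pos.mpr hlt
    have habs : |f t₁ - f t₂|
        = (2 * a * Real.sin (a * (s₁ - c)) + 2 * (1 - a ^ 2) * (s₁ - c)) * (t₂ - t₁) := by
      rw [heq2]
      exact abs_of_nonneg (mul_nonneg (by linarith) hpos.le)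
    have habs2 : |t₁ - t₂| = t₂ - t₁ := by rw [abs_sub_comm, abs_of_pos hpos]
    rw [habs, habs2]
    constructor
    · nlinarith
    · nlinarith
  intro t₁ t₂ h1 h2 h3 h4
  rw [helix_norm_sq a ha0 ha1 s₁ t₁, helix_norm_sq a ha0 ha1 s₁ t₂]
  rcases lt_trichotomy t₁ t₂ with h | h | h
  · exact key t₁ t₂ h h1 h2 h3 h4
  · subst h; simp [Real.pi_nonneg]
  · have := key t₂ t₁ h h3 h4 h1 h2
    rwa [abs_sub_comm (f t₂), abs_sub_comm t₂] at this
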